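/- Let σ > 0 and suppose a ∈ C^∞(ℝ^{2d} \ {0}) is real-valued and satisfies a(λx, λ^σ ξ) = λ^{σ+1} a(x,ξ) for all (x,ξ) ∈ T*ℝ^d \ {0} and λ > 0. Then there exists T > 0 such that for every (x,ξ) ∈ T*ℝ^d \ {0}, Hamilton's equations for a with initial datum (x,ξ) have a unique solution χ_t(x,ξ) ∈ T*ℝ^d \ {0} defined for all t ∈ [−T,T], and the flow commutes with anisotropic scaling: χ_t(Λ_σ(λ)(x,ξ)) = Λ_σ(λ) χ_t(x,ξ) for all λ > 0, (x,ξ) ∈ T*ℝ^d \ {0}, and t ∈ [−T,T]. -/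

import Mathlib

noncomputable section

open Real Filter MeasureTheory Set
open scoped BigOperators Topology
open scoped NNReal

abbrev Rd (d : ℕ) := EuclideanSpace ℝ (Fin d)

/-- The basis direction `(e_j, 0)` in phase space. -/
def eX {d : ℕ} (j : Fin d) : Rd d × Rd d := (EuclideanSpace.single j (1:ℝ), 0)

/-- The basis direction `(0, e_j)` in phase space. -/
def eXi {d : ℕ} (j : Fin d) : Rd d × Rd d := (0, EuclideanSpace.single j (1:ℝ))

/-- Directional (partial) derivative of a phase-space function along `v`. -/
def pdir {d : ℕ} {F : Type*} [NormedAddCommGroup F] [NormedSpace ℝ F]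
    (v : Rd d × Rd d) (a : Rd d × Rd d → F) (p : Rd d × Rd d) : F :=
  fderiv ℝ a p v

/-- The anisotropic scaling `Λ_σ(λ)(x,ξ) = (λx, λ^σ ξ)`. -/
def scaleA (σ l : ℝ) {d : ℕ} (p : Rd d × Rd d) : Rd d × Rd d :=
  (l • p.1, l ^ σ • p.2)

/-- `y : ℝ → T*ℝ^d` solves Hamilton's equations for `a` on `[-T,T]` with initial
datum `p`, staying away from the origin. -/
def IsHamiltonSolution {d : ℕ} (a : Rd d × Rd d → ℝ) (T : ℝ)
    (p : Rd d × Rd d) (y : ℝ → Rd d × Rd d) : Prop :=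
  y 0 = p ∧
  ∀ t ∈ Icc (-T) T, y t ≠ 0 ∧
    ∀ j : Fin d,
      HasDerivWithinAt (fun s => (y s).1 j) (pdir (eXi j) a (y t)) (Icc (-T) T) t ∧
      HasDerivWithinAt (fun s => (y s).2 j) (-(pdir (eX j) a (y t))) (Icc (-T) T) t

namespace Stmt14

variable {d : ℕ}

def ee (d : ℕ) : EuclideanSpace ℝ (Fin d) ≃L[ℝ] (Fin d → ℝ) := EuclideanSpace.equiv (Fin d) ℝ

def pack (v w : Fin d → ℝ) : Rd d × Rd d := ((ee d).symm v, (ee d).symm w)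

/-- The Hamiltonian vector field. -/
def ham (a : Rd d × Rd d → ℝ) (p : Rd d × Rd d) : Rd d × Rd d :=
  pack (fun j => pdir (eXi j) a p) (fun j => -(pdir (eX j) a p))

lemma pack_fst_apply (v w : Fin d → ℝ) (j : Fin d) : (pack v w).1 j = v j := rfl
lemma pack_snd_apply (v w : Fin d → ℝ) (j : Fin d) : (pack v w).2 j = w j := rfl

lemma hasDeriv_pack_iff {y : ℝ → Rd d × Rd d} {v w : Fin d → ℝ} {s : Set ℝ} {t : ℝ} :
    HasDerivWithinAt y (pack v w) s t ↔
      ∀ j, HasDerivWithinAt (fun u => (y u).1 j) (v j) s t ∧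
        HasDerivWithinAt (fun u => (y u).2 j) (w j) s t := by
  constructor
  · intro h j
    constructor
    · have h1 := ((EuclideanSpace.proj j).comp
        (ContinuousLinearMap.fst ℝ (Rd d) (Rd d))).hasFDerivAt.comp_hasDerivWithinAt t h
      exact h1
    · have h1 := ((EuclideanSpace.proj j).comp
        (ContinuousLinearMap.snd ℝ (Rd d) (Rd d))).hasFDerivAt.comp_hasDerivWithinAt t h
      exact h1
  · intro h
    have h1 : HasDerivWithinAt (fun u => (ee d) ((y u).1)) v s t :=
      hasDerivWithinAt_pi.mpr (fun j => (h j).1)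
    have h2 : HasDerivWithinAt (fun u => (ee d) ((y u).2)) w s t :=
      hasDerivWithinAt_pi.mpr (fun j => (h j).2)
    have h1' := ((ee d).symm : (Fin d → ℝ) →L[ℝ] Rd d).hasFDerivAt.comp_hasDerivWithinAt t h1
    have h2' := ((ee d).symm : (Fin d → ℝ) →L[ℝ] Rd d).hasFDerivAt.comp_hasDerivWithinAt t h2
    simp only [ContinuousLinearEquiv.coe_coe, ContinuousLinearEquiv.symm_apply_apply] at h1' h2'
    exact h1'.prodMk h2'

lemma isHamiltonSolution_iff (a : Rd d × Rd d → ℝ) (T : ℝ) (p : Rd d × Rd d)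
    (y : ℝ → Rd d × Rd d) :
    IsHamiltonSolution a T p y ↔
      (y 0 = p ∧ ∀ t ∈ Icc (-T) T, y t ≠ 0 ∧
        HasDerivWithinAt y (ham a (y t)) (Icc (-T) T) t) := by
  unfold IsHamiltonSolution ham
  refine and_congr_right fun _ => ?_
  refine forall₂_congr fun t ht => and_congr_right fun _ => ?_
  rw [hasDeriv_pack_iff]


variable {d : ℕ}

lemma isOpen_U : IsOpen {p : Rd d × Rd d | p ≠ 0} := isOpen_ne

lemma ham_contDiffOn {a : Rd d × Rd d → ℝ}
    (ha : ContDiffOn ℝ (⊤ : ℕ∞) a {p : Rd d × Rd d | p ≠ 0}) :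
    ContDiffOn ℝ 1 (ham a) {p : Rd d × Rd d | p ≠ 0} := by
  have hfd : ContDiffOn ℝ 1 (fderiv ℝ a) {p : Rd d × Rd d | p ≠ 0} := by
    exact ha.fderiv_of_isOpen isOpen_U (by decide)
  have hcomp : ∀ v : Rd d × Rd d,
      ContDiffOn ℝ 1 (fun p => fderiv ℝ a p v) {p : Rd d × Rd d | p ≠ 0} :=
    fun v => hfd.clm_apply contDiffOn_const
  have h1 : ContDiffOn ℝ 1 (fun p => (fun j => pdir (eXi j) a p : Fin d → ℝ))
      {p : Rd d × Rd d | p ≠ 0} := contDiffOn_pi.mpr fun j => hcomp (eXi j)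
  have h2 : ContDiffOn ℝ 1 (fun p => (fun j => -(pdir (eX j) a p) : Fin d → ℝ))
      {p : Rd d × Rd d | p ≠ 0} := contDiffOn_pi.mpr fun j => (hcomp (eX j)).neg
  have e1 : ContDiff ℝ 1 ((ee d).symm : (Fin d → ℝ) → Rd d) := (ee d).symm.contDiff
  exact ((e1.comp_contDiffOn h1).prodMk (e1.comp_contDiffOn h2))

lemma scaleA_smul (σ l m : ℝ) (hl : 0 ≤ l) (hm : 0 ≤ m) (p : Rd d × Rd d) :
    scaleA σ l (scaleA σ m p) = scaleA σ (l * m) p := by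
  unfold scaleA
  simp [smul_smul, Real.mul_rpow hl hm]

lemma scaleA_one (σ : ℝ) (p : Rd d × Rd d) : scaleA σ 1 p = p := by
  unfold scaleA; simp

lemma scaleA_ne_zero {σ l : ℝ} (hl : 0 < l) {p : Rd d × Rd d} (hp : p ≠ 0) :
    scaleA σ l p ≠ 0 := by
  intro h
  apply hp
  have h1 : l • p.1 = 0 ∧ l ^ σ • p.2 = 0 := by
    constructor
    · exact congrArg Prod.fst h
    · exact congrArg Prod.snd h
  have hl' : l ≠ 0 := ne_of_gt hl
  have hlσ : l ^ σ ≠ 0 := ne_of_gt (Real.rpow_pos_of_pos hl σ)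
  have : p.1 = 0 := by
    have := h1.1
    rwa [smul_eq_zero_iff_right hl'] at this
  have h2 : p.2 = 0 := by
    have := h1.2
    rwa [smul_eq_zero_iff_right hlσ] at this
  exact Prod.ext this h2

/-- `scaleA σ l` as a continuous linear map. -/
def Lmap (σ l : ℝ) (d : ℕ) : (Rd d × Rd d) →L[ℝ] (Rd d × Rd d) :=
  (l • ContinuousLinearMap.id ℝ (Rd d)).prodMap ((l ^ σ) • ContinuousLinearMap.id ℝ (Rd d))

lemma Lmap_apply (σ l : ℝ) (p : Rd d × Rd d) : Lmap σ l d p = scaleA σ l p := rfl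

lemma differentiableAt_of_top {a : Rd d × Rd d → ℝ}
    (ha : ContDiffOn ℝ (⊤ : ℕ∞) a {p : Rd d × Rd d | p ≠ 0})
    {q : Rd d × Rd d} (hq : q ≠ 0) : DifferentiableAt ℝ a q := by
  have h := ha.contDiffAt (isOpen_U.mem_nhds hq)
  exact h.differentiableAt (by decide)

lemma ham_scale {σ : ℝ} {a : Rd d × Rd d → ℝ}
    (ha : ContDiffOn ℝ (⊤ : ℕ∞) a {p : Rd d × Rd d | p ≠ 0})
    (hhom : ∀ p : Rd d × Rd d, p ≠ 0 → ∀ l : ℝ, 0 < l →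
      a (scaleA σ l p) = l ^ (σ + 1) * a p)
    {p : Rd d × Rd d} (hp : p ≠ 0) {l : ℝ} (hl : 0 < l) :
    ham a (scaleA σ l p) = scaleA σ l (ham a p) := by
  have hq : scaleA σ l p ≠ 0 := scaleA_ne_zero hl hp
  have hlσ : (0:ℝ) < l ^ σ := Real.rpow_pos_of_pos hl σ
  have haD : DifferentiableAt ℝ a (scaleA σ l p) := differentiableAt_of_top ha hq
  have haDp : DifferentiableAt ℝ a p := differentiableAt_of_top ha hp
  have hcomp : HasFDerivAt (fun q => a (Lmap σ l d q))
      ((fderiv ℝ a (scaleA σ l p)).comp (Lmap σ l d)) p := by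
    have := HasFDerivAt.comp p
      (by rw [Lmap_apply]; exact haD.hasFDerivAt) ((Lmap σ l d).hasFDerivAt)
    exact this
  have heq : (fun q => a (Lmap σ l d q)) =ᶠ[𝓝 p] fun q => l ^ (σ+1) * a q := by
    filter_upwards [isOpen_U.mem_nhds hp] with q hq'
    rw [Lmap_apply]
    exact hhom q hq' l hl
  have h2 : HasFDerivAt (fun q => l ^ (σ+1) * a q)
      ((l ^ (σ+1)) • fderiv ℝ a p) p := haDp.hasFDerivAt.const_mul _
  have h3 : (fderiv ℝ a (scaleA σ l p)).comp (Lmap σ l d)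
      = (l ^ (σ+1)) • fderiv ℝ a p :=
    hcomp.unique (h2.congr_of_eventuallyEq heq)
  have key : ∀ v, fderiv ℝ a (scaleA σ l p) (Lmap σ l d v)
      = l ^ (σ+1) * fderiv ℝ a p v := by
    intro v
    have := ContinuousLinearMap.ext_iff.mp h3 v
    simpa [smul_eq_mul] using this
  have hladd : l ^ (σ + 1) = l ^ σ * l := by
    rw [Real.rpow_add hl, Real.rpow_one]
  have hXi : ∀ j, pdir (eXi j) a (scaleA σ l p) = l * pdir (eXi j) a p := by
    intro j
    have hL : Lmap σ l d (eXi j) = l ^ σ • eXi j := by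
      rw [Lmap_apply]
      unfold scaleA eXi
      refine Prod.ext ?_ ?_ <;> simp
    have h := key (eXi j)
    rw [hL, _root_.map_smul, smul_eq_mul, hladd] at h
    unfold pdir
    exact mul_left_cancel₀ (ne_of_gt hlσ) (h.trans (by ring))
  have hX : ∀ j, pdir (eX j) a (scaleA σ l p) = l ^ σ * pdir (eX j) a p := by
    intro j
    have hL : Lmap σ l d (eX j) = l • eX j := by
      rw [Lmap_apply]
      unfold scaleA eX
      refine Prod.ext ?_ ?_ <;> simp
    have h := key (eX j)
    rw [hL, _root_.map_smul, smul_eq_mul, hladd] at h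
    unfold pdir
    exact mul_left_cancel₀ (ne_of_gt hl) (h.trans (by ring))
  unfold ham pack scaleA
  refine Prod.ext ?_ ?_
  · show (ee d).symm (fun j => pdir (eXi j) a (scaleA σ l p))
      = l • (ee d).symm (fun j => pdir (eXi j) a p)
    rw [← _root_.map_smul]
    congr 1
    funext j
    simp [hXi j]
  · show (ee d).symm (fun j => -(pdir (eX j) a (scaleA σ l p)))
      = l ^ σ • (ee d).symm (fun j => -(pdir (eX j) a p))
    rw [← _root_.map_smul]
    congr 1
    funext j
    simp [hX j]

lemma sol_scale {σ : ℝ} {a : Rd d × Rd d → ℝ}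
    (ha : ContDiffOn ℝ (⊤ : ℕ∞) a {p : Rd d × Rd d | p ≠ 0})
    (hhom : ∀ p : Rd d × Rd d, p ≠ 0 → ∀ l : ℝ, 0 < l →
      a (scaleA σ l p) = l ^ (σ + 1) * a p)
    {T : ℝ} {p : Rd d × Rd d} {y : ℝ → Rd d × Rd d}
    (hy : IsHamiltonSolution a T p y) {l : ℝ} (hl : 0 < l) :
    IsHamiltonSolution a T (scaleA σ l p) (fun t => scaleA σ l (y t)) := by
  rw [isHamiltonSolution_iff] at hy ⊢
  refine ⟨by rw [hy.1], fun t ht => ?_⟩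
  obtain ⟨hne, hd⟩ := hy.2 t ht
  refine ⟨scaleA_ne_zero hl hne, ?_⟩
  have h1 := (Lmap σ l d).hasFDerivAt.comp_hasDerivWithinAt t hd
  simp only [Lmap_apply] at h1
  rw [ham_scale ha hhom hne hl]
  exact h1


/-- The closed annulus. -/
def annK (d : ℕ) (c R : ℝ) : Set (Rd d × Rd d) := {p | c ≤ ‖p‖ ∧ ‖p‖ ≤ R}

lemma isCompact_annK (c R : ℝ) : IsCompact (annK d c R) := by
  apply Metric.isCompact_of_isClosed_isBounded
  · exact (isClosed_le continuous_const continuous_norm).inter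
      (isClosed_le continuous_norm continuous_const)
  · apply Metric.isBounded_closedBall (x := (0 : Rd d × Rd d)) (r := R) |>.subset
    intro p hp
    exact mem_closedBall_zero_iff.mpr hp.2

lemma annK_subset_U {c R : ℝ} (hc : 0 < c) : annK d c R ⊆ {p : Rd d × Rd d | p ≠ 0} := by
  intro p hp h
  have h1 : c ≤ ‖p‖ := hp.1
  rw [h, norm_zero] at h1
  linarith

lemma norm_sub_le_of_mem_segment {p q m : Rd d × Rd d} (hm : m ∈ segment ℝ p q) :
    ‖p - m‖ ≤ ‖p - q‖ := by
  obtain ⟨u, v, hu, hv, huv, rfl⟩ := hm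
  have hu1 : u = 1 - v := by linarith
  subst hu1
  have hkey : p - ((1 - v) • p + v • q) = v • (p - q) := by
    rw [smul_sub, sub_smul, one_smul]
    abel
  rw [hkey, norm_smul, Real.norm_of_nonneg hv]
  have hv1 : v ≤ 1 := by linarith
  calc v * ‖p - q‖ ≤ 1 * ‖p - q‖ := by
        apply mul_le_mul_of_nonneg_right hv1 (norm_nonneg _)
    _ = ‖p - q‖ := one_mul _

lemma exists_lipschitzOnWith_annK {F : (Rd d × Rd d) → Rd d × Rd d}
    (hF : ContDiffOn ℝ 1 F {p : Rd d × Rd d | p ≠ 0}) {c : ℝ} (R : ℝ) (hc : 0 < c) :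
    ∃ L : ℝ≥0, LipschitzOnWith L F (annK d c R) := by
  have hc2 : (0:ℝ) < c / 2 := by linarith
  set B := annK d (c/2) R with hB
  have hBc : IsCompact B := isCompact_annK _ _
  have hBU : B ⊆ {p : Rd d × Rd d | p ≠ 0} := annK_subset_U hc2
  have hdiff : ∀ x ∈ B, DifferentiableAt ℝ F x := fun x hx =>
    (hF.contDiffAt (isOpen_U.mem_nhds (hBU hx))).differentiableAt (by norm_num)
  obtain ⟨M0, hM0⟩ := hBc.exists_bound_of_continuousOn (hF.continuousOn.mono hBU)
  set M := max M0 0 with hMdef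
  have hM : ∀ x ∈ B, ‖F x‖ ≤ M := fun x hx => (hM0 x hx).trans (le_max_left _ _)
  have hM0' : (0:ℝ) ≤ M := le_max_right _ _
  obtain ⟨L0, hL0⟩ := hBc.exists_bound_of_continuousOn
    ((hF.continuousOn_fderiv_of_isOpen isOpen_U le_rfl).mono hBU)
  set L2 := max (max L0 0) (4 * M / c) with hL2def
  have hL2nn : (0:ℝ) ≤ L2 := le_trans (le_max_right _ _) (le_max_left _ _)
  have hL0le : ∀ x ∈ B, ‖fderiv ℝ F x‖ ≤ L2 := fun x hx =>
    (hL0 x hx).trans ((le_max_left _ _).trans (le_max_left _ _))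
  have h4Mc : 4 * M / c ≤ L2 := le_max_right _ _
  refine ⟨⟨L2, hL2nn⟩, ?_⟩
  refine LipschitzOnWith.of_dist_le_mul ?_
  intro p hp q hq
  rw [dist_eq_norm, dist_eq_norm]
  show ‖F p - F q‖ ≤ L2 * ‖p - q‖
  have hpB : p ∈ B := ⟨by have := hp.1; dsimp [annK] at *; linarith, hp.2⟩
  have hqB : q ∈ B := ⟨by have := hq.1; dsimp [annK] at *; linarith, hq.2⟩
  by_cases hseg : ∀ m ∈ segment ℝ p q, c/2 ≤ ‖m‖
  · have hsegB : segment ℝ p q ⊆ B := by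
      intro m hm
      refine ⟨hseg m hm, ?_⟩
      have h1 : segment ℝ p q ⊆ Metric.closedBall 0 R :=
        (convex_closedBall (0 : Rd d × Rd d) R).segment_subset
          (by simpa [Metric.mem_closedBall, dist_zero_right] using hpB.2)
          (by simpa [Metric.mem_closedBall, dist_zero_right] using hqB.2)
      simpa [Metric.mem_closedBall, dist_zero_right] using h1 hm
    have := Convex.norm_image_sub_le_of_norm_fderiv_le
      (f := F) (C := L2) (s := segment ℝ p q)
      (fun x hx => hdiff x (hsegB hx))
      (fun x hx => hL0le x (hsegB hx))
      (convex_segment p q) (right_mem_segment ℝ p q) (left_mem_segment ℝ p q)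
    exact this
  · push_neg at hseg
    obtain ⟨m, hm, hmlt⟩ := hseg
    have h1 : c/2 ≤ ‖p - m‖ := by
      have h2 := norm_sub_norm_le p m
      have h3 : c ≤ ‖p‖ := hp.1
      linarith
    have hpq : c/2 ≤ ‖p - q‖ := h1.trans (norm_sub_le_of_mem_segment hm)
    have hcne : c ≠ 0 := ne_of_gt hc
    calc ‖F p - F q‖ ≤ ‖F p‖ + ‖F q‖ := norm_sub_le _ _
      _ ≤ M + M := add_le_add (hM p hpB) (hM q hqB)
      _ = (4 * M / c) * (c / 2) := by field_simp; ring
      _ ≤ L2 * ‖p - q‖ := by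
          apply mul_le_mul h4Mc hpq (by linarith) hL2nn


theorem pl_exists_mem {E : Type*} [NormedAddCommGroup E] [NormedSpace ℝ E] [CompleteSpace E]
    {v : ℝ → E → E} {tMin tMax : ℝ} {t₀ : Icc tMin tMax} {x₀ : E} {a L K : ℝ≥0}
    (hpl : IsPicardLindelof v t₀ x₀ a 0 L K) :
    ∃ f : ℝ → E, f t₀ = x₀ ∧ ∀ t ∈ Icc tMin tMax,
      f t ∈ Metric.closedBall x₀ a ∧ HasDerivWithinAt f (v t (f t)) (Icc tMin tMax) t := by
  obtain ⟨α, hα⟩ := ODE.FunSpace.exists_isFixedPt_next hpl (Metric.mem_closedBall_self le_rfl)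
  refine ⟨α.compProj, by rw [ODE.FunSpace.compProj_val, ← hα, ODE.FunSpace.next_apply₀],
    fun t ht ↦ ⟨α.compProj_mem_closedBall hpl.mul_max_le, ?_⟩⟩
  apply ODE.hasDerivWithinAt_picard_Icc t₀.2 hpl.continuousOn_uncurry
    α.continuous_compProj.continuousOn (fun _ ht' ↦ α.compProj_mem_closedBall hpl.mul_max_le)
    x₀ ht |>.congr_of_mem _ ht
  intro t' ht'
  nth_rw 1 [← hα]
  rw [ODE.FunSpace.compProj_of_mem ht', ODE.FunSpace.next_apply]

lemma exists_T_sol_sphere {a : Rd d × Rd d → ℝ}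
    (ha : ContDiffOn ℝ (⊤ : ℕ∞) a {p : Rd d × Rd d | p ≠ 0}) :
    ∃ T > (0:ℝ), ∀ q : Rd d × Rd d, ‖q‖ = 1 → ∃ y, IsHamiltonSolution a T q y := by
  have hFC : ContDiffOn ℝ 1 (ham a) {p : Rd d × Rd d | p ≠ 0} := ham_contDiffOn ha
  obtain ⟨L, hL⟩ := exists_lipschitzOnWith_annK hFC (c := 1/2) (R := 2) (by norm_num)
  obtain ⟨M0, hM0⟩ := (isCompact_annK (d := d) (1/2) 2).exists_bound_of_continuousOn
    (hFC.continuousOn.mono (annK_subset_U (by norm_num)))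
  set M := max M0 1 with hMdef
  have hM1 : (0:ℝ) < M := lt_of_lt_of_le one_pos (le_max_right _ _)
  set T := 1 / (4 * M) with hTdef
  have hT0 : (0:ℝ) < T := by positivity
  refine ⟨T, hT0, fun q hq => ?_⟩
  have ball_sub : Metric.closedBall q (1/2) ⊆ annK d (1/2) 2 := by
    intro x hx
    rw [Metric.mem_closedBall, dist_eq_norm] at hx
    constructor
    · have h1 := norm_sub_norm_le q x
      have h2 : ‖q - x‖ = ‖x - q‖ := norm_sub_rev _ _
      rw [hq] at h1
      linarith [h2 ▸ h1]
    · have h1 := norm_le_norm_add_norm_sub' x q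
      rw [hq] at h1
      linarith [h1]
  have ball_sub' : Metric.closedBall q ((1/2 : ℝ≥0) : ℝ) ⊆ annK d (1/2) 2 := by
    norm_num; exact ball_sub
  have hpl : IsPicardLindelof (fun _ => ham a) (tmin := -T) (tmax := T)
      ⟨0, ⟨by linarith, by linarith⟩⟩ q (1/2) 0 ⟨M, hM1.le⟩ L :=
    { lipschitzOnWith := fun t _ => hL.mono ball_sub'
      continuousOn := fun x _ => continuousOn_const
      norm_le := fun t _ x hx => (hM0 x (ball_sub' hx)).trans (le_max_left _ _)
      mul_max_le := by
        have hmax : max (T - 0) (0 - -T) = T := by simp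
        show M * max (T - 0) (0 - -T) ≤ ((1/2 : ℝ≥0) : ℝ) - ((0 : ℝ≥0) : ℝ)
        rw [hmax, hTdef, show M * (1 / (4 * M)) = 1 / 4 by
          rw [mul_one_div, div_eq_iff (by positivity)]; ring]
        norm_num }
  obtain ⟨f, hf0, hf⟩ := pl_exists_mem hpl
  refine ⟨f, (isHamiltonSolution_iff _ _ _ _).mpr ⟨hf0, fun t ht => ?_⟩⟩
  obtain ⟨hmem, hder⟩ := hf t ht
  refine ⟨?_, hder⟩
  intro h0
  rw [Metric.mem_closedBall, dist_eq_norm, h0, zero_sub, norm_neg, hq] at hmem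
  norm_num at hmem


lemma exists_scale_norm_one {σ : ℝ} (hσ : 0 < σ) {p : Rd d × Rd d} (hp : p ≠ 0) :
    ∃ l : ℝ, 0 < l ∧ ‖scaleA σ l p‖ = 1 := by
  have hn : 0 < ‖p‖ := norm_pos_iff.mpr hp
  set n := ‖p‖ with hndef
  have hNorm : ∀ l : ℝ, 0 ≤ l →
      ‖scaleA σ l p‖ = max (l * ‖p.1‖) (l ^ σ * ‖p.2‖) := by
    intro l hl
    rw [Prod.norm_def]
    unfold scaleA
    simp only [norm_smul, Real.norm_of_nonneg hl,
      Real.norm_of_nonneg (Real.rpow_nonneg hl σ)]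
  set N : ℝ → ℝ := fun l => max (l * ‖p.1‖) (l ^ σ * ‖p.2‖) with hNdef
  have hcont : Continuous N := by
    apply Continuous.max
    · exact continuous_id.mul continuous_const
    · have h1 : Continuous fun l : ℝ => l ^ σ := by
        rw [continuous_iff_continuousAt]
        intro x
        exact Real.continuousAt_rpow_const x σ (Or.inr hσ.le)
      exact h1.mul continuous_const
  set l₀ := min (n⁻¹) (n ^ (-σ⁻¹)) with hl₀def
  set l₁ := max (n⁻¹) (n ^ (-σ⁻¹)) with hl₁def
  have hninv : (0:ℝ) < n⁻¹ := by positivity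
  have hnr : (0:ℝ) < n ^ (-σ⁻¹) := Real.rpow_pos_of_pos hn _
  have hl₀ : 0 < l₀ := lt_min hninv hnr
  have hle : l₀ ≤ l₁ := min_le_max
  have hrpow_eq : (n ^ (-σ⁻¹)) ^ σ = n⁻¹ := by
    rw [← Real.rpow_mul hn.le]
    have h : -σ⁻¹ * σ = -1 := by field_simp
    rw [h, Real.rpow_neg_one]
  have hfle : ‖p.1‖ ≤ n := norm_fst_le p
  have hsle : ‖p.2‖ ≤ n := norm_snd_le p
  have hup : N l₀ ≤ 1 := by
    apply max_le
    · calc l₀ * ‖p.1‖ ≤ n⁻¹ * n :=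
          mul_le_mul (min_le_left _ _) hfle (norm_nonneg _) hninv.le
        _ = 1 := inv_mul_cancel₀ (ne_of_gt hn)
    · have h1 : l₀ ^ σ ≤ (n ^ (-σ⁻¹)) ^ σ :=
        Real.rpow_le_rpow hl₀.le (min_le_right _ _) hσ.le
      calc l₀ ^ σ * ‖p.2‖ ≤ (n ^ (-σ⁻¹)) ^ σ * n :=
          mul_le_mul h1 hsle (norm_nonneg _) (Real.rpow_nonneg hnr.le σ)
        _ = n⁻¹ * n := by rw [hrpow_eq]
        _ = 1 := inv_mul_cancel₀ (ne_of_gt hn)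
  have hlow : 1 ≤ N l₁ := by
    have hcases : n = ‖p.1‖ ∨ n = ‖p.2‖ := by
      rw [hndef, Prod.norm_def]
      rcases max_choice ‖p.1‖ ‖p.2‖ with h | h <;> [left; right] <;> exact h
    rcases hcases with h | h
    · apply le_max_of_le_left
      calc (1:ℝ) = n⁻¹ * n := (inv_mul_cancel₀ (ne_of_gt hn)).symm
        _ ≤ l₁ * ‖p.1‖ := by
            rw [← h]
            exact mul_le_mul (le_max_left _ _) le_rfl hn.le
              (le_trans hninv.le (le_max_left _ _))
    · apply le_max_of_le_right
      have h1 : (n ^ (-σ⁻¹)) ^ σ ≤ l₁ ^ σ :=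
        Real.rpow_le_rpow hnr.le (le_max_right _ _) hσ.le
      calc (1:ℝ) = n⁻¹ * n := (inv_mul_cancel₀ (ne_of_gt hn)).symm
        _ = (n ^ (-σ⁻¹)) ^ σ * n := by rw [hrpow_eq]
        _ ≤ l₁ ^ σ * ‖p.2‖ := by
            rw [← h]
            exact mul_le_mul h1 le_rfl hn.le (Real.rpow_nonneg
              (le_trans hnr.le (le_max_right _ _)) σ)
  obtain ⟨l, hlmem, hNl⟩ := intermediate_value_Icc hle hcont.continuousOn ⟨hup, hlow⟩
  refine ⟨l, lt_of_lt_of_le hl₀ hlmem.1, ?_⟩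
  rw [hNorm l (le_trans hl₀.le hlmem.1)]
  exact hNl

lemma exists_T_sol_all {σ : ℝ} (hσ : 0 < σ) {a : Rd d × Rd d → ℝ}
    (ha : ContDiffOn ℝ (⊤ : ℕ∞) a {p : Rd d × Rd d | p ≠ 0})
    (hhom : ∀ p : Rd d × Rd d, p ≠ 0 → ∀ l : ℝ, 0 < l →
      a (scaleA σ l p) = l ^ (σ + 1) * a p) :
    ∃ T > (0:ℝ), ∀ p : Rd d × Rd d, p ≠ 0 → ∃ y, IsHamiltonSolution a T p y := by
  obtain ⟨T, hT, hsph⟩ := exists_T_sol_sphere ha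
  refine ⟨T, hT, fun p hp => ?_⟩
  obtain ⟨l, hl, hnorm⟩ := exists_scale_norm_one hσ hp
  obtain ⟨y, hy⟩ := hsph (scaleA σ l p) hnorm
  refine ⟨fun t => scaleA σ l⁻¹ (y t), ?_⟩
  have h1 := sol_scale ha hhom hy (inv_pos.mpr hl)
  rwa [scaleA_smul σ l⁻¹ l (by positivity) hl.le, inv_mul_cancel₀ (ne_of_gt hl),
    scaleA_one] at h1

lemma sol_unique {a : Rd d × Rd d → ℝ}
    (ha : ContDiffOn ℝ (⊤ : ℕ∞) a {p : Rd d × Rd d | p ≠ 0})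
    {T : ℝ} (hT : 0 < T) {p : Rd d × Rd d}
    {y z : ℝ → Rd d × Rd d}
    (hy : IsHamiltonSolution a T p y) (hz : IsHamiltonSolution a T p z) :
    ∀ t ∈ Icc (-T) T, y t = z t := by
  rw [isHamiltonSolution_iff] at hy hz
  have hIcc0 : (0:ℝ) ∈ Icc (-T) T := ⟨by linarith, hT.le⟩
  have hycont : ContinuousOn y (Icc (-T) T) :=
    fun t ht => ((hy.2 t ht).2).continuousWithinAt
  have hzcont : ContinuousOn z (Icc (-T) T) :=
    fun t ht => ((hz.2 t ht).2).continuousWithinAt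
  set A := y '' Icc (-T) T ∪ z '' Icc (-T) T with hAdef
  have hcA : IsCompact A :=
    (isCompact_Icc.image_of_continuousOn hycont).union
      (isCompact_Icc.image_of_continuousOn hzcont)
  have hAne : A.Nonempty := ⟨y 0, mem_union_left _ (mem_image_of_mem y hIcc0)⟩
  have hAne0 : ∀ x ∈ A, x ≠ 0 := by
    intro x hx
    rcases hx with hx | hx
    · obtain ⟨t, ht, rfl⟩ := hx
      exact (hy.2 t ht).1
    · obtain ⟨t, ht, rfl⟩ := hx
      exact (hz.2 t ht).1
  obtain ⟨p₀, hp₀A, hmin⟩ := hcA.exists_isMinOn hAne continuous_norm.continuousOn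
  have hc : 0 < ‖p₀‖ := norm_pos_iff.mpr (hAne0 p₀ hp₀A)
  obtain ⟨R, hR⟩ := hcA.exists_bound_of_continuousOn continuousOn_id
  have hsubA : A ⊆ annK d ‖p₀‖ R := fun x hx => ⟨isMinOn_iff.mp hmin x hx, hR x hx⟩
  obtain ⟨L, hL⟩ := exists_lipschitzOnWith_annK (ham_contDiffOn ha) R hc
  have main := ODE_solution_unique_of_mem_Icc (v := fun _ => ham a)
    (s := fun _ => annK d ‖p₀‖ R) (K := L) (fun _ _ => hL)
    (t₀ := (0:ℝ)) (a := -T) (b := T) ⟨by linarith, hT⟩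
    hycont
    (fun t ht => ((hy.2 t (Ioo_subset_Icc_self ht)).2).hasDerivAt
      (Icc_mem_nhds ht.1 ht.2))
    (fun t ht => hsubA (mem_union_left _
      (mem_image_of_mem y (Ioo_subset_Icc_self ht))))
    hzcont
    (fun t ht => ((hz.2 t (Ioo_subset_Icc_self ht)).2).hasDerivAt
      (Icc_mem_nhds ht.1 ht.2))
    (fun t ht => hsubA (mem_union_right _
      (mem_image_of_mem z (Ioo_subset_Icc_self ht))))
    (hy.1.trans hz.1.symm)
  exact fun t ht => main ht

end Stmt14

/-- For an anisotropically homogeneous Hamiltonian of degree `σ+1` the Hamilton flow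
exists and is unique on a uniform time interval `[-T,T]`, and it commutes with the
anisotropic scaling `Λ_σ(λ)`. -/
theorem statement14 {d : ℕ} (σ : ℝ) (hσ : 0 < σ) (a : Rd d × Rd d → ℝ)
    (ha : ContDiffOn ℝ (⊤ : ℕ∞) a {p : Rd d × Rd d | p ≠ 0})
    (hhom : ∀ p : Rd d × Rd d, p ≠ 0 → ∀ l : ℝ, 0 < l →
      a (scaleA σ l p) = l ^ (σ + 1) * a p) :
    ∃ T > (0 : ℝ), ∃ χ : ℝ → (Rd d × Rd d) → Rd d × Rd d,
      (∀ p : Rd d × Rd d, p ≠ 0 → IsHamiltonSolution a T p (fun t => χ t p)) ∧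
      (∀ p : Rd d × Rd d, p ≠ 0 → ∀ y : ℝ → Rd d × Rd d,
        IsHamiltonSolution a T p y → ∀ t ∈ Icc (-T) T, y t = χ t p) ∧
      (∀ l : ℝ, 0 < l → ∀ p : Rd d × Rd d, p ≠ 0 → ∀ t ∈ Icc (-T) T,
        χ t (scaleA σ l p) = scaleA σ l (χ t p)) := by
  classical
  obtain ⟨T, hT, hex⟩ := Stmt14.exists_T_sol_all hσ ha hhom
  set χ : ℝ → (Rd d × Rd d) → Rd d × Rd d :=
    fun t p => if h : p ≠ 0 then Classical.choose (hex p h) t else 0 with hχ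
  have hsol : ∀ p : Rd d × Rd d, p ≠ 0 → IsHamiltonSolution a T p (fun t => χ t p) := by
    intro p hp
    have hfun : (fun t => χ t p) = Classical.choose (hex p hp) := by
      funext t
      simp only [hχ, dif_pos hp]
    rw [hfun]
    exact Classical.choose_spec (hex p hp)
  refine ⟨T, hT, χ, fun p hp => hsol p hp, ?_, ?_⟩
  · intro p hp y hy t ht
    exact Stmt14.sol_unique ha hT hy (hsol p hp) t ht
  · intro l hl p hp t ht
    have h1 : IsHamiltonSolution a T (scaleA σ l p) (fun t => scaleA σ l (χ t p)) :=
      Stmt14.sol_scale ha hhom (hsol p hp) hl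
    exact (Stmt14.sol_unique ha hT h1
      (hsol _ (Stmt14.scaleA_ne_zero hl hp)) t ht).symm
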